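/- Let G be the adjacency matrix of a directed, weighted, strongly connected network with largest eigenvalue Λ, and let τ, γ > 0 with γ > τΛ. Suppose W : [0,1]² → [0,1] satisfies W(x,y) ≥ xy. Then the only steady state x ∈ [0,1]ᴺ of the system ẋ_i = τ Σ_j g_{ij}(x_j − W(x_i,x_j)) − γ x_i is x = 0. -/

import Mathlib

open Matrix Filter
open scoped NNReal ENNReal

attribute [local instance] Matrix.linftyOpNormedRing Matrix.linftyOpNormedAlgebra

/-- First half of Theorem 5.8: for a strongly connected (irreducible) nonnegative
adjacency matrix `G` with largest eigenvalue `Λ`, if `γ > τΛ` and `W(x,y) ≥ xy`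
then the only steady state in `[0,1]^N` of the closed SIS model is `x = 0`. -/
theorem disease_free_unique_steady_state {N : ℕ} (G : Matrix (Fin N) (Fin N) ℝ)
    (hG : ∀ i j, 0 ≤ G i j)
    (hirr : ∀ i j : Fin N, ∃ k : ℕ, 0 < (G ^ k) i j)
    (Λ τ γ : ℝ) (hτ : 0 < τ) (hγ : 0 < γ)
    (hΛeig : Module.End.HasEigenvalue
      (Matrix.toLin' (G.map (Complex.ofReal : ℝ → ℂ))) (Λ : ℂ))
    (hΛmax : ∀ μ : ℂ, Module.End.HasEigenvalue
      (Matrix.toLin' (G.map (Complex.ofReal : ℝ → ℂ))) μ → ‖μ‖ ≤ Λ)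
    (hthr : γ > τ * Λ)
    (W : ℝ → ℝ → ℝ)
    (hWrange : ∀ x y : ℝ, x ∈ Set.Icc (0:ℝ) 1 → y ∈ Set.Icc (0:ℝ) 1 →
      W x y ∈ Set.Icc (0:ℝ) 1)
    (hW : ∀ x y : ℝ, x ∈ Set.Icc (0:ℝ) 1 → y ∈ Set.Icc (0:ℝ) 1 →
      x * y ≤ W x y)
    (x : Fin N → ℝ) (hx : ∀ i, x i ∈ Set.Icc (0:ℝ) 1)
    (hss : ∀ i : Fin N,
      τ * ∑ j, G i j * (x j - W (x i) (x j)) - γ * x i = 0) :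
    x = 0 := by
  set A : Matrix (Fin N) (Fin N) ℂ := G.map (Complex.ofReal : ℝ → ℂ) with hA
  -- Λ is nonnegative
  have hΛ0 : 0 ≤ Λ := by
    have := hΛmax _ hΛeig
    have h2 : ‖(Λ : ℂ)‖ = |Λ| := by rw [Complex.norm_real, Real.norm_eq_abs]
    rw [h2] at this
    exact le_trans (abs_nonneg Λ) this
  set c : ℝ := γ / τ with hc
  have hcΛ : Λ < c := by
    rw [hc, lt_div_iff₀ hτ]
    linarith [hthr]
  have hc0 : 0 < c := lt_of_le_of_lt hΛ0 hcΛ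
  -- Step 1: componentwise  c * x i ≤ (G x)_i
  have key : ∀ i, c * x i ≤ ∑ j, G i j * x j := by
    intro i
    have h1 : γ * x i = τ * ∑ j, G i j * (x j - W (x i) (x j)) := by
      have := hss i; linarith
    have h2 : ∑ j, G i j * (x j - W (x i) (x j)) ≤ ∑ j, G i j * x j := by
      apply Finset.sum_le_sum
      intro j _
      apply mul_le_mul_of_nonneg_left _ (hG i j)
      have hWj := hW (x i) (x j) (hx i) (hx j)
      have : 0 ≤ x i * x j := mul_nonneg (hx i).1 (hx j).1
      linarith
    have h3 : γ * x i ≤ τ * ∑ j, G i j * x j := by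
      rw [h1]; exact mul_le_mul_of_nonneg_left h2 (le_of_lt hτ)
    rw [hc, div_mul_eq_mul_div, div_le_iff₀ hτ]
    calc γ * x i ≤ τ * ∑ j, G i j * x j := h3
      _ = (∑ j, G i j * x j) * τ := by ring
  -- entries of G^n are nonnegative
  have hGn : ∀ n : ℕ, ∀ i j, 0 ≤ (G ^ n) i j := by
    intro n
    induction n with
    | zero => intro i j; by_cases h : i = j <;> simp [pow_zero, Matrix.one_apply, h]
    | succ n ih =>
      intro i j
      rw [pow_succ, Matrix.mul_apply]
      exact Finset.sum_nonneg fun k _ => mul_nonneg (ih i k) (hG k j)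
  -- Step 2: iterate:  c^n * x i ≤ (G^n x)_i
  have iter : ∀ n : ℕ, ∀ i, c ^ n * x i ≤ ∑ j, (G ^ n) i j * x j := by
    intro n
    induction n with
    | zero => intro i; simp [pow_zero, Matrix.one_apply]
    | succ n ih =>
      intro i
      have h1 : c ^ (n + 1) * x i = c * (c ^ n * x i) := by ring
      have h2 : c ^ n * x i ≤ ∑ j, (G ^ n) i j * x j := ih i
      have h3 : c * (c ^ n * x i) ≤ c * ∑ j, (G ^ n) i j * x j :=
        mul_le_mul_of_nonneg_left h2 (le_of_lt hc0)
      have h4 : c * ∑ j, (G ^ n) i j * x j ≤ ∑ j, (G ^ n) i j * ∑ k, G j k * x k := by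
        rw [Finset.mul_sum]
        apply Finset.sum_le_sum
        intro j _
        calc c * ((G ^ n) i j * x j) = (G ^ n) i j * (c * x j) := by ring
          _ ≤ (G ^ n) i j * ∑ k, G j k * x k :=
            mul_le_mul_of_nonneg_left (key j) (hGn n i j)
      have h5 : (∑ j, (G ^ n) i j * ∑ k, G j k * x k) = ∑ k, (G ^ (n + 1)) i k * x k := by
        rw [pow_succ]
        simp_rw [Matrix.mul_apply, Finset.mul_sum, Finset.sum_mul]
        rw [Finset.sum_comm]
        apply Finset.sum_congr rfl
        intro k _
        apply Finset.sum_congr rfl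
        intro j _
        ring
      rw [h1, ← h5] at *
      linarith
  -- Step 3: (G^n x)_i ≤ ‖G^n‖ (linfty op norm)
  have bound : ∀ n : ℕ, ∀ i, (∑ j, (G ^ n) i j * x j) ≤ ‖G ^ n‖ := by
    intro n i
    have h1 : (∑ j, (G ^ n) i j * x j) ≤ ∑ j, (G ^ n) i j := by
      apply Finset.sum_le_sum
      intro j _
      nth_rewrite 2 [← mul_one ((G ^ n) i j)]
      exact mul_le_mul_of_nonneg_left (hx j).2 (hGn n i j)
    refine h1.trans ?_
    have h2 : ((∑ j, ‖(G ^ n) i j‖₊ : ℝ≥0) : ℝ) ≤ ‖G ^ n‖ := by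
      rw [Matrix.linfty_opNorm_def]
      exact NNReal.coe_le_coe.mpr (Finset.le_sup (f := fun i => ∑ j, ‖(G ^ n) i j‖₊) (Finset.mem_univ i))
    refine le_trans (le_of_eq ?_) h2
    push_cast
    apply Finset.sum_congr rfl
    intro j _
    rw [Real.norm_eq_abs, abs_of_nonneg (hGn n i j)]
  -- norms of real and complexified powers agree
  have hApow : ∀ n : ℕ, A ^ n = (G ^ n).map (Complex.ofReal : ℝ → ℂ) := by
    intro n
    rw [hA]
    have := map_pow (Complex.ofRealHom.mapMatrix :
      Matrix (Fin N) (Fin N) ℝ →+* Matrix (Fin N) (Fin N) ℂ) G n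
    have h := this.symm; simp only [RingHom.mapMatrix_apply] at h; exact h
  have hnorm : ∀ n : ℕ, ‖A ^ n‖₊ = ‖G ^ n‖₊ := by
    intro n
    rw [hApow n, Matrix.linfty_opNNNorm_def, Matrix.linfty_opNNNorm_def]
    apply Finset.sup_congr rfl
    intro i _
    apply Finset.sum_congr rfl
    intro j _
    simp [Matrix.map_apply]
  -- Step 4: spectral radius bound
  have hspec : spectralRadius ℂ A ≤ ENNReal.ofReal Λ := by
    rw [spectralRadius]
    refine iSup₂_le fun μ hμ => ?_
    have hev : Module.End.HasEigenvalue (Matrix.toLin' A) μ := by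
      rw [Module.End.hasEigenvalue_iff_mem_spectrum]
      have : spectrum ℂ (Matrix.toLin' A) = spectrum ℂ A := by
        have h := AlgEquiv.spectrum_eq
          (Matrix.toLinAlgEquiv' : Matrix (Fin N) (Fin N) ℂ ≃ₐ[ℂ] _) A
        rw [← h]
        rfl
      rw [this]
      exact hμ
    have := hΛmax μ hev
    rw [ENNReal.ofReal]
    have habs : ‖μ‖₊ ≤ Λ.toNNReal := by
      rw [← NNReal.coe_le_coe]
      rw [Real.coe_toNNReal _ hΛ0]
      rw [coe_nnnorm]
      exact le_trans (le_of_eq rfl) this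
    exact_mod_cast habs
  -- pick c' strictly between Λ and c
  set c' : ℝ := (Λ + c) / 2 with hc'
  have hc'1 : Λ < c' := by rw [hc']; linarith
  have hc'2 : c' < c := by rw [hc']; linarith
  have hc'0 : 0 < c' := lt_of_le_of_lt hΛ0 hc'1
  -- Gelfand: eventually ‖A^n‖ < c'^n
  have gel := spectrum.pow_nnnorm_pow_one_div_tendsto_nhds_spectralRadius A
  have hlt : spectralRadius ℂ A < (c'.toNNReal : ℝ≥0∞) := by
    refine lt_of_le_of_lt hspec ?_
    rw [ENNReal.ofReal]
    exact_mod_cast (by rwa [← Real.toNNReal_lt_toNNReal_iff_of_nonneg hΛ0] at hc'1)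
  have hev : ∀ᶠ n : ℕ in atTop, (‖A ^ n‖₊ : ℝ≥0∞) ^ (1 / (n : ℝ)) < (c'.toNNReal : ℝ≥0∞) :=
    gel.eventually_lt_const hlt
  have hev2 : ∀ᶠ n : ℕ in atTop, ‖G ^ n‖ ≤ c' ^ n := by
    filter_upwards [hev, eventually_ge_atTop 1] with n hn hn1
    have hn0 : (n : ℝ) ≠ 0 := Nat.cast_ne_zero.mpr (by omega)
    have h1 : ((‖A ^ n‖₊ : ℝ≥0∞) ^ (1 / (n : ℝ))) ^ (n : ℝ) ≤
        ((c'.toNNReal : ℝ≥0∞)) ^ (n : ℝ) :=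
      ENNReal.rpow_le_rpow (le_of_lt hn) (Nat.cast_nonneg n)
    rw [← ENNReal.rpow_mul, one_div, inv_mul_cancel₀ hn0, ENNReal.rpow_one,
      ENNReal.rpow_natCast] at h1
    rw [← ENNReal.coe_pow, ENNReal.coe_le_coe, hnorm n] at h1
    have h2 : (‖G ^ n‖₊ : ℝ) ≤ ((c'.toNNReal ^ n : ℝ≥0) : ℝ) := by exact_mod_cast h1
    rw [coe_nnnorm] at h2
    refine h2.trans (le_of_eq ?_)
    push_cast
    rw [Real.coe_toNNReal _ (le_of_lt hc'0)]
  -- conclude x i ≤ (c'/c)^n eventually, hence x i ≤ 0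
  funext i
  have hxle : ∀ᶠ n : ℕ in atTop, x i ≤ (c' / c) ^ n := by
    filter_upwards [hev2] with n hn
    have h1 : c ^ n * x i ≤ c' ^ n := le_trans (iter n i) (le_trans (bound n i) hn)
    have h2 : 0 < c ^ n := pow_pos hc0 n
    rw [div_pow]
    rw [le_div_iff₀ h2]
    linarith [h1]
  have hto : Tendsto (fun n : ℕ => (c' / c) ^ n) atTop (nhds 0) := by
    apply tendsto_pow_atTop_nhds_zero_of_lt_one
    · positivity
    · rw [div_lt_one hc0]; exact hc'2
  have : x i ≤ 0 := ge_of_tendsto hto hxle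
  have := (hx i).1
  simp only [Pi.zero_apply]
  linarith
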